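/- For F(θ) = log(1 + exp(−w₄w₃w₂w₁)) on ℝ⁴, along the curve w₁ = 0, w₂ = w₃ = w₄ = t, the ratio ‖∇²F(θ)‖_F / ‖∇F(θ)‖₂² is bounded below by 1 for all t; hence F is not subquadratically Lipschitz smooth. -/

import Mathlib

open Real

/-- The binary cross-entropy risk of the four-layer linear network with final sigmoid. -/
noncomputable def nnRisk (θ : Fin 4 → ℝ) : ℝ :=
  Real.log (1 + Real.exp (-(θ 3 * θ 2 * θ 1 * θ 0)))

/-- An entry of the gradient of `nnRisk`. -/
noncomputable def nnGrad (θ : Fin 4 → ℝ) (i : Fin 4) : ℝ :=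
  fderiv ℝ nnRisk θ (Pi.single i 1)

/-- An entry of the Hessian of `nnRisk`. -/
noncomputable def nnHess (θ : Fin 4 → ℝ) (i j : Fin 4) : ℝ :=
  fderiv ℝ (fun ψ => fderiv ℝ nnRisk ψ (Pi.single j 1)) θ (Pi.single i 1)

noncomputable def phi' (x : ℝ) : ℝ := -Real.exp (-x) / (1 + Real.exp (-x))
noncomputable def phi'' (x : ℝ) : ℝ := Real.exp (-x) / (1 + Real.exp (-x))^2

lemma exp_pos_aux (x : ℝ) : (0:ℝ) < 1 + Real.exp (-x) := by positivity

lemma hasDerivAt_phi (x : ℝ) :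
    HasDerivAt (fun x : ℝ => Real.log (1 + Real.exp (-x))) (phi' x) x := by
  have h1 : HasDerivAt (fun x : ℝ => 1 + Real.exp (-x)) (-Real.exp (-x)) x := by
    simpa using (((hasDerivAt_id x).neg).exp.const_add 1)
  have := h1.log (ne_of_gt (exp_pos_aux x))
  simpa [phi', neg_div] using this

lemma hasDerivAt_phi' (x : ℝ) : HasDerivAt phi' (phi'' x) x := by
  have h1 : HasDerivAt (fun x : ℝ => -Real.exp (-x)) (Real.exp (-x)) x := by
    exact (((hasDerivAt_id x).neg).exp.neg).congr_deriv (by simp)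
  have h2 : HasDerivAt (fun x : ℝ => 1 + Real.exp (-x)) (-Real.exp (-x)) x := by
    simpa using (((hasDerivAt_id x).neg).exp.const_add 1)
  have := h1.div h2 (ne_of_gt (exp_pos_aux x))
  refine this.congr_deriv ?_
  unfold phi''
  field_simp
  ring

abbrev pr (i : Fin 4) : (Fin 4 → ℝ) →L[ℝ] ℝ := ContinuousLinearMap.proj i

noncomputable def DP (ψ : Fin 4 → ℝ) : (Fin 4 → ℝ) →L[ℝ] ℝ :=
  (ψ 3 * ψ 2 * ψ 1) • pr 0 +
    ψ 0 • ((ψ 3 * ψ 2) • pr 1 + ψ 1 • (ψ 3 • pr 2 + ψ 2 • pr 3))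

lemma hasFDerivAt_P (ψ : Fin 4 → ℝ) :
    HasFDerivAt (fun ψ : Fin 4 → ℝ => ψ 3 * ψ 2 * ψ 1 * ψ 0) (DP ψ) ψ := by
  have h3 : HasFDerivAt (fun ψ : Fin 4 → ℝ => ψ 3) (pr 3) ψ := (pr 3).hasFDerivAt
  have h2 : HasFDerivAt (fun ψ : Fin 4 → ℝ => ψ 2) (pr 2) ψ := (pr 2).hasFDerivAt
  have h1 : HasFDerivAt (fun ψ : Fin 4 → ℝ => ψ 1) (pr 1) ψ := (pr 1).hasFDerivAt
  have h0 : HasFDerivAt (fun ψ : Fin 4 → ℝ => ψ 0) (pr 0) ψ := (pr 0).hasFDerivAt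
  have := ((h3.mul h2).mul h1).mul h0
  exact this

lemma hasFDerivAt_nnRisk (ψ : Fin 4 → ℝ) :
    HasFDerivAt nnRisk (phi' (ψ 3 * ψ 2 * ψ 1 * ψ 0) • DP ψ) ψ :=
  (hasDerivAt_phi (ψ 3 * ψ 2 * ψ 1 * ψ 0)).comp_hasFDerivAt (f := fun ψ : Fin 4 → ℝ => ψ 3 * ψ 2 * ψ 1 * ψ 0) ψ (hasFDerivAt_P ψ)

lemma DP_apply (ψ : Fin 4 → ℝ) (v : Fin 4 → ℝ) :
    DP ψ v = (ψ 3 * ψ 2 * ψ 1) * v 0 +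
      ψ 0 * ((ψ 3 * ψ 2) * v 1 + ψ 1 * (ψ 3 * v 2 + ψ 2 * v 3)) := by
  simp [DP]; ring

lemma grad_eq (ψ : Fin 4 → ℝ) (j : Fin 4) :
    nnGrad ψ j = phi' (ψ 3 * ψ 2 * ψ 1 * ψ 0) *
      ((ψ 3 * ψ 2 * ψ 1) * (Pi.single j 1 : Fin 4 → ℝ) 0 +
        ψ 0 * ((ψ 3 * ψ 2) * (Pi.single j 1 : Fin 4 → ℝ) 1 +
          ψ 1 * (ψ 3 * (Pi.single j 1 : Fin 4 → ℝ) 2 + ψ 2 * (Pi.single j 1 : Fin 4 → ℝ) 3))) := by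
  rw [nnGrad, (hasFDerivAt_nnRisk ψ).fderiv]
  simp [DP_apply]

noncomputable def Dc (a : Fin 4 → ℝ) (ψ : Fin 4 → ℝ) : (Fin 4 → ℝ) →L[ℝ] ℝ :=
  a 0 • ((ψ 3 * ψ 2) • pr 1 + ψ 1 • (ψ 3 • pr 2 + ψ 2 • pr 3)) +
  (ψ 0 • (a 1 • (ψ 3 • pr 2 + ψ 2 • pr 3) +
      (ψ 1 • (a 2 • pr 3 + a 3 • pr 2) + (ψ 3 * a 2 + ψ 2 * a 3) • pr 1)) +
    ((ψ 3 * ψ 2) * a 1 + ψ 1 * (ψ 3 * a 2 + ψ 2 * a 3)) • pr 0)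

lemma hasFDerivAt_c (a : Fin 4 → ℝ) (ψ : Fin 4 → ℝ) :
    HasFDerivAt (fun ψ : Fin 4 → ℝ =>
      (ψ 3 * ψ 2 * ψ 1) * a 0 + ψ 0 * ((ψ 3 * ψ 2) * a 1 + ψ 1 * (ψ 3 * a 2 + ψ 2 * a 3)))
      (Dc a ψ) ψ := by
  have h3 : HasFDerivAt (fun ψ : Fin 4 → ℝ => ψ 3) (pr 3) ψ := (pr 3).hasFDerivAt
  have h2 : HasFDerivAt (fun ψ : Fin 4 → ℝ => ψ 2) (pr 2) ψ := (pr 2).hasFDerivAt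
  have h1 : HasFDerivAt (fun ψ : Fin 4 → ℝ => ψ 1) (pr 1) ψ := (pr 1).hasFDerivAt
  have h0 : HasFDerivAt (fun ψ : Fin 4 → ℝ => ψ 0) (pr 0) ψ := (pr 0).hasFDerivAt
  have hq := (h3.mul_const (a 2)).add (h2.mul_const (a 3))
  have hp2 := ((h3.mul h2).mul_const (a 1)).add (h1.mul hq)
  have hleft := ((h3.mul h2).mul h1).mul_const (a 0)
  have := hleft.add (h0.mul hp2)
  exact this

lemma hasFDerivAt_phi'P (ψ : Fin 4 → ℝ) :
    HasFDerivAt (fun ψ : Fin 4 → ℝ => phi' (ψ 3 * ψ 2 * ψ 1 * ψ 0))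
      (phi'' (ψ 3 * ψ 2 * ψ 1 * ψ 0) • DP ψ) ψ :=
  (hasDerivAt_phi' (ψ 3 * ψ 2 * ψ 1 * ψ 0)).comp_hasFDerivAt (f := fun ψ : Fin 4 → ℝ => ψ 3 * ψ 2 * ψ 1 * ψ 0) ψ (hasFDerivAt_P ψ)

lemma hess_eq (ψ : Fin 4 → ℝ) (i j : Fin 4) :
    nnHess ψ i j =
      phi' (ψ 3 * ψ 2 * ψ 1 * ψ 0) * Dc (Pi.single j 1) ψ (Pi.single i 1) +
      ((ψ 3 * ψ 2 * ψ 1) * (Pi.single j 1 : Fin 4 → ℝ) 0 +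
        ψ 0 * ((ψ 3 * ψ 2) * (Pi.single j 1 : Fin 4 → ℝ) 1 +
          ψ 1 * (ψ 3 * (Pi.single j 1 : Fin 4 → ℝ) 2 + ψ 2 * (Pi.single j 1 : Fin 4 → ℝ) 3))) *
        (phi'' (ψ 3 * ψ 2 * ψ 1 * ψ 0) * DP ψ (Pi.single i 1)) := by
  set a : Fin 4 → ℝ := (Pi.single j 1 : Fin 4 → ℝ) with ha
  have hfun : (fun ψ' : Fin 4 → ℝ => fderiv ℝ nnRisk ψ' (Pi.single j 1)) =
      (fun ψ' : Fin 4 → ℝ => phi' (ψ' 3 * ψ' 2 * ψ' 1 * ψ' 0) *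
        ((ψ' 3 * ψ' 2 * ψ' 1) * a 0 +
          ψ' 0 * ((ψ' 3 * ψ' 2) * a 1 + ψ' 1 * (ψ' 3 * a 2 + ψ' 2 * a 3)))) := by
    funext ψ'
    rw [(hasFDerivAt_nnRisk ψ').fderiv]
    simp [DP_apply, ha]
  have H : HasFDerivAt (fun ψ' : Fin 4 → ℝ => phi' (ψ' 3 * ψ' 2 * ψ' 1 * ψ' 0) *
          ((ψ' 3 * ψ' 2 * ψ' 1) * a 0 +
            ψ' 0 * ((ψ' 3 * ψ' 2) * a 1 + ψ' 1 * (ψ' 3 * a 2 + ψ' 2 * a 3)))) _ ψ :=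
    (hasFDerivAt_phi'P ψ).mul (hasFDerivAt_c a ψ)
  rw [nnHess, hfun, H.fderiv]
  simp

lemma Dc_apply (a ψ v : Fin 4 → ℝ) :
    Dc a ψ v = a 0 * ((ψ 3 * ψ 2) * v 1 + ψ 1 * (ψ 3 * v 2 + ψ 2 * v 3)) +
      ψ 0 * (a 1 * (ψ 3 * v 2 + ψ 2 * v 3) +
        (ψ 1 * (a 2 * v 3 + a 3 * v 2) + (ψ 3 * a 2 + ψ 2 * a 3) * v 1)) +
      ((ψ 3 * ψ 2) * a 1 + ψ 1 * (ψ 3 * a 2 + ψ 2 * a 3)) * v 0 := by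
  simp [Dc]; ring

lemma phi'_zero : phi' 0 = -(1/2) := by norm_num [phi']
lemma phi''_zero : phi'' 0 = 1/4 := by norm_num [phi'']

lemma gradVal (t : ℝ) :
    (∑ i : Fin 4, (nnGrad (fun i => if i = 0 then (0:ℝ) else t) i)^2) = t^6/4 := by
  simp only [Fin.sum_univ_four, grad_eq]
  simp (config := { decide := true }) [Pi.single_apply, phi'_zero]
  ring

lemma hessVal (t : ℝ) :
    (∑ i : Fin 4, ∑ j : Fin 4,
        (nnHess (fun i => if i = 0 then (0:ℝ) else t) i j)^2) = t^12/16 + 3/2*t^4 := by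
  simp only [Fin.sum_univ_four, hess_eq, Dc_apply, DP_apply]
  simp (config := { decide := true }) [Pi.single_apply, phi'_zero, phi''_zero]
  ring


/-- Along the curve `w₁ = 0`, `w₂ = w₃ = w₄ = t`, the ratio of the Frobenius norm of the
Hessian of the network risk to the squared Euclidean norm of its gradient is at least `1`,
while the gradient norm diverges; hence the risk is not subquadratically Lipschitz smooth. -/
theorem neural_network_not_subquadratically_smooth :
    (∀ t : ℝ, t ≠ 0 →
      1 ≤ Real.sqrt (∑ i : Fin 4, ∑ j : Fin 4,
              (nnHess (fun i => if i = 0 then (0:ℝ) else t) i j)^2)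
            / (∑ i : Fin 4, (nnGrad (fun i => if i = 0 then (0:ℝ) else t) i)^2)) ∧
    Filter.Tendsto
      (fun t : ℝ => ∑ i : Fin 4, (nnGrad (fun i => if i = 0 then (0:ℝ) else t) i)^2)
      Filter.atTop Filter.atTop := by
  constructor
  · intro t ht
    rw [hessVal t, gradVal t]
    have hg : (0:ℝ) < t^6/4 := by positivity
    rw [le_div_iff₀ hg, one_mul]
    rw [show t^12/16 + 3/2*t^4 = (t^6/4)^2 + 3/2*t^4 by ring]
    have h4 : (0:ℝ) ≤ 3/2*t^4 := by positivity
    nlinarith [Real.sq_sqrt (by positivity : (0:ℝ) ≤ (t^6/4)^2 + 3/2*t^4),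
      Real.sqrt_nonneg ((t^6/4)^2 + 3/2*t^4), hg]
  · have : (fun t : ℝ => ∑ i : Fin 4, (nnGrad (fun i => if i = 0 then (0:ℝ) else t) i)^2)
        = fun t : ℝ => t^6/4 := funext gradVal
    rw [this]
    exact (Filter.tendsto_pow_atTop (by norm_num : (6:ℕ) ≠ 0)).atTop_div_const (by norm_num)
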